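/- Let f' : {0,1}^{2n-1} → {0,1} be monotone and let g : {0,1}^n → {0,1} be the minor of f' with respect to a random map π₂ : [2n-1] → [n] with π₂(1)=1 and the remaining 2n-2 elements partitioned uniformly at random into n-1 pairs P₂,…,P_n with π₂(j)=i for j ∈ P_i. Then for every j ∈ {0,1,…,n-1}, E_{π₂}[μ_g(j)] = μ'(2j), where μ_g(j) is the fraction of size-j subsets of [n]\{1} in B_g(1) and μ'(k) is the fraction of size-k subsets of [2n-1]\{1} in B_{f'}(1). -/

import Mathlib

open Finset

/-- A Boolean function on subsets of `Fin m` is monotone. -/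
def MonotoneB {m : ℕ} (f : Finset (Fin m) → Bool) : Prop :=
  ∀ S T : Finset (Fin m), S ⊆ T → f S = true → f T = true

/-- The boundary of coordinate `i`: sets `S` not containing `i` with
`f (S ∪ {i}) = 1` and `f S = 0`. -/
def boundary {m : ℕ} (f : Finset (Fin m) → Bool) (i : Fin m) : Finset (Finset (Fin m)) :=
  Finset.univ.filter (fun S => i ∉ S ∧ f (insert i S) = true ∧ f S = false)

/-- `mu f i j` : the fraction of size-`j` subsets of `[m] \ {i}` lying in the
boundary of coordinate `i`. -/
def mu {m : ℕ} (f : Finset (Fin m) → Bool) (i : Fin m) (j : ℕ) : ℚ :=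
  (((boundary f i).filter (fun S => S.card = j)).card : ℚ) / (((m - 1).choose j : ℕ) : ℚ)

/-- The Shapley value of coordinate `i` of `f` : the probability over a uniformly
random permutation `σ` that `i` is the pivotal coordinate on the increasing path
`∅ = P₀ ⊂ P₁ ⊂ ⋯ ⊂ Pₘ = univ` given by `σ`. -/
def shapley {m : ℕ} (f : Finset (Fin m) → Bool) (i : Fin m) : ℚ :=
  (((Finset.univ : Finset (Equiv.Perm (Fin m))).filter (fun σ =>
    ∃ j : Fin m, σ j = i ∧
      f ((Finset.univ.filter (fun k => k < j)).image (fun k => σ k)) = false ∧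
      f ((Finset.univ.filter (fun k => k ≤ j)).image (fun k => σ k)) = true)).card : ℚ)
    / ((Nat.factorial m : ℕ) : ℚ)

/-- `g` is the minor of `f` with respect to `π`. -/
def minorOf {m k : ℕ} (g : Finset (Fin k) → Bool) (f : Finset (Fin m) → Bool)
    (π : Fin m → Fin k) : Prop :=
  ∀ S : Finset (Fin k), g S = f (Finset.univ.filter (fun i => π i ∈ S))

/-- The minor of `f` with respect to `π`, as a function. -/
def minorFun {m k : ℕ} (f : Finset (Fin m) → Bool) (π : Fin m → Fin k) :
    Finset (Fin k) → Bool :=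
  fun S => f (Finset.univ.filter (fun i => π i ∈ S))

/-- The set of "pairing" maps `π₂ : [2n-1] → [n]` with `π₂(1) = 1` and the
remaining `2n-2` elements partitioned into `n-1` pairs. -/
def pairingMaps (n : ℕ) (hn : 0 < n) : Finset (Fin (2*n-1) → Fin n) :=
  Finset.univ.filter (fun π => π ⟨0, by omega⟩ = ⟨0, hn⟩ ∧
    ∀ i : Fin n, i.val ≠ 0 → (Finset.univ.filter (fun j => π j = i)).card = 2)



namespace ExpMuAux

lemma npos {n : ℕ} (hn : 0 < n) : 0 < 2*n-1 := by omega

variable {m k : ℕ}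

/-- `T` is closed under the fibers of `π`. -/
def satC (π : Fin m → Fin k) (T : Finset (Fin m)) : Prop :=
  ∀ a b : Fin m, π a = π b → a ∈ T → b ∈ T

instance (π : Fin m → Fin k) : DecidablePred (satC π) := fun _ => by
  unfold satC; infer_instance

/-- Preimage of a finset under `π`. -/
def preim (π : Fin m → Fin k) (S : Finset (Fin k)) : Finset (Fin m) :=
  univ.filter (fun i => π i ∈ S)

lemma mem_preim {π : Fin m → Fin k} {S : Finset (Fin k)} {i : Fin m} :
    i ∈ preim π S ↔ π i ∈ S := by simp [preim]

lemma satC_preim (π : Fin m → Fin k) (S : Finset (Fin k)) : satC π (preim π S) := by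
  intro a b hab ha
  rw [mem_preim] at *
  rwa [← hab]

lemma preim_image {π : Fin m → Fin k} {T : Finset (Fin m)} (h : satC π T) :
    preim π (T.image π) = T := by
  ext i
  simp only [mem_preim, Finset.mem_image]
  constructor
  · rintro ⟨a, ha, hai⟩
    exact h a i hai ha
  · exact fun hi => ⟨i, hi, rfl⟩

lemma swap_mem {a b y : Fin m} {T : Finset (Fin m)} (ha : a ∉ T) (hb : b ∉ T) :
    Equiv.swap a b y ∈ T ↔ y ∈ T := by
  rcases eq_or_ne y a with rfl | hya
  · rw [Equiv.swap_apply_left]; simp [ha, hb]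
  rcases eq_or_ne y b with rfl | hyb
  · rw [Equiv.swap_apply_right]; simp [ha, hb]
  · rw [Equiv.swap_apply_of_ne_of_ne hya hyb]

lemma exists_perm (z : Fin m) (T T' : Finset (Fin m)) (hz : z ∉ T) (hz' : z ∉ T')
    (hc : T.card = T'.card) :
    ∃ σ : Equiv.Perm (Fin m), σ z = z ∧ ∀ x, σ x ∈ T' ↔ x ∈ T := by
  have e : {x // x ∈ T} ≃ {x // x ∈ T'} := Finset.equivOfCardEq hc
  have hcompl : Fintype.card {x // ¬ x ∈ T} = Fintype.card {x // ¬ x ∈ T'} := by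
    rw [Fintype.card_subtype_compl, Fintype.card_subtype_compl]
    congr 1
    rw [Fintype.card_coe, Fintype.card_coe, hc]
  have ec : {x // ¬ x ∈ T} ≃ {x // ¬ x ∈ T'} := Fintype.equivOfCardEq hcompl
  set σ₀ : Equiv.Perm (Fin m) := Equiv.subtypeCongr e ec with hσ₀
  have key : ∀ x, σ₀ x ∈ T' ↔ x ∈ T := by
    intro x
    by_cases h : x ∈ T
    · have : σ₀ x = (e ⟨x, h⟩ : Fin m) := by
        simp [hσ₀, Equiv.subtypeCongr, Equiv.sumCompl_symm_apply_of_pos h]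
      rw [this]
      exact iff_of_true (e ⟨x, h⟩).2 h
    · have : σ₀ x = (ec ⟨x, h⟩ : Fin m) := by
        simp [hσ₀, Equiv.subtypeCongr, Equiv.sumCompl_symm_apply_of_neg h]
      rw [this]
      exact iff_of_false (ec ⟨x, h⟩).2 h
  refine ⟨σ₀.trans (Equiv.swap (σ₀ z) z), ?_, ?_⟩
  · simp [Equiv.swap_apply_left]
  · intro x
    have h1 : σ₀ z ∉ T' := by rw [key]; exact hz
    calc Equiv.swap (σ₀ z) z (σ₀ x) ∈ T' ↔ σ₀ x ∈ T' := swap_mem h1 hz'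
      _ ↔ x ∈ T := key x

end ExpMuAux

namespace ExpMuAux

variable {n : ℕ} {hn : 0 < n} {π : Fin (2*n-1) → Fin n}

lemma mem_pairing (hπ : π ∈ pairingMaps n hn) :
    π ⟨0, npos hn⟩ = ⟨0, hn⟩ ∧
      ∀ i : Fin n, i.val ≠ 0 → (univ.filter (fun j => π j = i)).card = 2 := by
  simpa [pairingMaps] using hπ

lemma fiber_zero_eq (hπ : π ∈ pairingMaps n hn) :
    univ.filter (fun i => π i = (⟨0, hn⟩ : Fin n)) = {(⟨0, npos hn⟩ : Fin (2*n-1))} := by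
  obtain ⟨h0, h2⟩ := mem_pairing hπ
  have hcard : (univ.filter (fun i => π i = (⟨0, hn⟩ : Fin n))).card = 1 := by
    have hsum : (univ : Finset (Fin (2*n-1))).card
        = ∑ b : Fin n, (univ.filter (fun i => π i = b)).card :=
      Finset.card_eq_sum_card_fiberwise (fun x _ => mem_univ _)
    rw [Finset.card_univ, Fintype.card_fin] at hsum
    have hsplit := (Finset.add_sum_erase univ
      (fun b => (univ.filter (fun i => π i = b)).card)
      (mem_univ (⟨0, hn⟩ : Fin n))).symm
    have herase : ∑ b ∈ univ.erase (⟨0, hn⟩ : Fin n),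
        (univ.filter (fun i => π i = b)).card = (n - 1) * 2 := by
      rw [Finset.sum_congr rfl (fun b hb => h2 b (by
        have := Finset.ne_of_mem_erase hb
        simpa [Fin.ext_iff] using this)),
        Finset.sum_const, Finset.card_erase_of_mem (mem_univ _), Finset.card_univ,
        Fintype.card_fin, smul_eq_mul]
    rw [herase] at hsplit
    omega
  obtain ⟨a, ha⟩ := Finset.card_eq_one.mp hcard
  have hz : (⟨0, npos hn⟩ : Fin (2*n-1)) ∈ univ.filter (fun i => π i = (⟨0, hn⟩ : Fin n)) := by
    simp [h0]
  rw [ha] at hz ⊢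
  rw [Finset.mem_singleton] at hz
  rw [hz]

lemma pi_eq_zero_iff (hπ : π ∈ pairingMaps n hn) {i : Fin (2*n-1)} :
    π i = (⟨0, hn⟩ : Fin n) ↔ i = (⟨0, npos hn⟩ : Fin (2*n-1)) := by
  constructor
  · intro h
    have : i ∈ univ.filter (fun i => π i = (⟨0, hn⟩ : Fin n)) := by simp [h]
    rw [fiber_zero_eq hπ, Finset.mem_singleton] at this
    exact this
  · rintro rfl
    exact (mem_pairing hπ).1

lemma card_preim (hπ : π ∈ pairingMaps n hn) {S : Finset (Fin n)}
    (hS : (⟨0, hn⟩ : Fin n) ∉ S) : (preim π S).card = 2 * S.card := by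
  obtain ⟨h0, h2⟩ := mem_pairing hπ
  rw [Finset.card_eq_sum_card_fiberwise (f := π) (t := S) (fun x hx => mem_preim.mp hx)]
  rw [Finset.sum_congr rfl (fun b hb => ?_), Finset.sum_const, smul_eq_mul, mul_comm]
  have hfil : (preim π S).filter (fun a => π a = b) = univ.filter (fun a => π a = b) := by
    ext a
    simp only [preim, Finset.filter_filter, mem_filter, mem_univ, true_and]
    exact ⟨fun h => h.2, fun h => ⟨h ▸ hb, h⟩⟩
  rw [hfil]
  refine h2 b (fun hb0 => hS ?_)
  rwa [show b = (⟨0, hn⟩ : Fin n) from Fin.ext hb0] at hb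

lemma preim_insert (hπ : π ∈ pairingMaps n hn) (S : Finset (Fin n)) :
    preim π (insert (⟨0, hn⟩ : Fin n) S)
      = insert (⟨0, npos hn⟩ : Fin (2*n-1)) (preim π S) := by
  ext i
  simp only [mem_preim, Finset.mem_insert, pi_eq_zero_iff hπ]

lemma image_preim (hπ : π ∈ pairingMaps n hn) (S : Finset (Fin n)) :
    (preim π S).image π = S := by
  obtain ⟨h0, h2⟩ := mem_pairing hπ
  ext b
  simp only [Finset.mem_image]
  constructor
  · rintro ⟨a, ha, rfl⟩
    exact mem_preim.mp ha
  · intro hb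
    rcases eq_or_ne b (⟨0, hn⟩ : Fin n) with rfl | hbne
    · exact ⟨⟨0, npos hn⟩, mem_preim.mpr (by rw [h0]; exact hb), h0⟩
    · have hne : (univ.filter (fun a => π a = b)).Nonempty := by
        rw [← Finset.card_pos, h2 b (by simpa [Fin.ext_iff] using hbne)]
        norm_num
      obtain ⟨a, ha⟩ := hne
      simp only [mem_filter] at ha
      exact ⟨a, mem_preim.mpr (by rw [ha.2]; exact hb), ha.2⟩

end ExpMuAux

namespace ExpMuAux

variable {n : ℕ} {hn : 0 < n} {π : Fin (2*n-1) → Fin n}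

lemma mem_boundary {m : ℕ} {f : Finset (Fin m) → Bool} {i : Fin m} {S : Finset (Fin m)} :
    S ∈ boundary f i ↔ i ∉ S ∧ f (insert i S) = true ∧ f S = false := by
  simp [boundary]

lemma mem_pairing_iff :
    π ∈ pairingMaps n hn ↔ (π ⟨0, npos hn⟩ = ⟨0, hn⟩ ∧
      ∀ i : Fin n, i.val ≠ 0 → (univ.filter (fun j => π j = i)).card = 2) := by
  simp [pairingMaps]

lemma zn_not_mem_image (hπ : π ∈ pairingMaps n hn) {T : Finset (Fin (2*n-1))}
    (hzT : (⟨0, npos hn⟩ : Fin (2*n-1)) ∉ T) : (⟨0, hn⟩ : Fin n) ∉ T.image π := by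
  simp only [Finset.mem_image]
  rintro ⟨a, haT, ha0⟩
  rw [pi_eq_zero_iff hπ] at ha0
  exact hzT (ha0 ▸ haT)

lemma stepA (hπ : π ∈ pairingMaps n hn) (f' : Finset (Fin (2*n-1)) → Bool) (j : ℕ) :
    ((boundary (minorFun f' π) ⟨0, hn⟩).filter (fun S => S.card = j)).card
      = (((boundary f' ⟨0, npos hn⟩).filter (fun T => T.card = 2*j)).filter (satC π)).card := by
  apply Finset.card_nbij' (preim π) (fun T => T.image π)
  · intro S hS
    simp only [Finset.mem_coe, mem_filter, mem_boundary] at hS ⊢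
    obtain ⟨⟨hzS, hgi, hg⟩, hcard⟩ := hS
    refine ⟨⟨⟨?_, ?_, ?_⟩, ?_⟩, satC_preim π S⟩
    · simp only [mem_preim, (mem_pairing hπ).1]
      exact hzS
    · rw [← preim_insert hπ]
      exact hgi
    · exact hg
    · rw [card_preim hπ hzS, hcard]
  · intro T hT
    simp only [Finset.mem_coe, mem_filter, mem_boundary] at hT ⊢
    obtain ⟨⟨⟨hzT, hfi, hf⟩, hcT⟩, hsat⟩ := hT
    have hP : preim π (T.image π) = T := preim_image hsat
    have hzS := zn_not_mem_image hπ hzT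
    refine ⟨⟨hzS, ?_, ?_⟩, ?_⟩
    · show f' (preim π (insert (⟨0, hn⟩ : Fin n) (T.image π))) = true
      rw [preim_insert hπ, hP]
      exact hfi
    · show f' (preim π (T.image π)) = false
      rw [hP]
      exact hf
    · have hc := card_preim hπ hzS
      rw [hP, hcT] at hc
      omega
  · exact fun S _ => image_preim hπ S
  · exact fun T hT => preim_image (mem_filter.mp hT).2

lemma stepB (hπ : π ∈ pairingMaps n hn) (j : ℕ) :
    ((powersetCard (2*j) (univ.erase (⟨0, npos hn⟩ : Fin (2*n-1)))).filter (satC π)).card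
      = (n-1).choose j := by
  have key : ((powersetCard (2*j) (univ.erase (⟨0, npos hn⟩ : Fin (2*n-1)))).filter
        (satC π)).card
      = (powersetCard j (univ.erase (⟨0, hn⟩ : Fin n))).card := by
    apply Finset.card_nbij' (fun T => T.image π) (preim π)
    · intro T hT
      simp only [Finset.mem_coe, mem_filter, Finset.mem_powersetCard, Finset.subset_erase] at hT ⊢
      obtain ⟨⟨⟨_, hzT⟩, hcT⟩, hsat⟩ := hT
      have hzS := zn_not_mem_image hπ hzT
      refine ⟨⟨Finset.subset_univ _, hzS⟩, ?_⟩
      have hc := card_preim hπ hzS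
      rw [preim_image hsat, hcT] at hc
      omega
    · intro S hS
      simp only [Finset.mem_coe, mem_filter, Finset.mem_powersetCard, Finset.subset_erase] at hS ⊢
      obtain ⟨⟨_, hzS⟩, hcS⟩ := hS
      refine ⟨⟨⟨Finset.subset_univ _, ?_⟩, ?_⟩, satC_preim π S⟩
      · simp only [mem_preim, (mem_pairing hπ).1]
        exact hzS
      · rw [card_preim hπ hzS, hcS]
    · exact fun T hT => preim_image (mem_filter.mp hT).2
    · exact fun S _ => image_preim hπ S
  rw [key, Finset.card_powersetCard, Finset.card_erase_of_mem (mem_univ _),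
    Finset.card_univ, Fintype.card_fin]

lemma comp_mem_filter {τ : Equiv.Perm (Fin (2*n-1))} {T T' : Finset (Fin (2*n-1))}
    (hτz : τ (⟨0, npos hn⟩ : Fin (2*n-1)) = ⟨0, npos hn⟩)
    (hmem : ∀ x, τ x ∈ T' ↔ x ∈ T) {π : Fin (2*n-1) → Fin n}
    (hπ : π ∈ (pairingMaps n hn).filter (fun π => satC π T)) :
    (π ∘ τ.symm) ∈ (pairingMaps n hn).filter (fun π => satC π T') := by
  rw [mem_filter] at hπ ⊢
  obtain ⟨hπP, hsat⟩ := hπ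
  obtain ⟨h0, h2⟩ := mem_pairing_iff.mp hπP
  have hτz' : τ.symm (⟨0, npos hn⟩ : Fin (2*n-1)) = ⟨0, npos hn⟩ :=
    (Equiv.symm_apply_eq τ).mpr hτz.symm
  have hmem' : ∀ x, x ∈ T' ↔ τ.symm x ∈ T := by
    intro x
    rw [← hmem (τ.symm x), Equiv.apply_symm_apply]
  constructor
  · refine mem_pairing_iff.mpr ⟨?_, ?_⟩
    · show π (τ.symm ⟨0, npos hn⟩) = _
      rw [hτz']
      exact h0
    · intro i hi
      have hfil : univ.filter (fun x => (π ∘ τ.symm) x = i)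
          = (univ.filter (fun x => π x = i)).map τ.toEmbedding := by
        ext x
        rw [Finset.mem_map_equiv]
        simp
      rw [hfil, Finset.card_map]
      exact h2 i hi
  · intro a b hab ha
    rw [hmem'] at ha ⊢
    exact hsat (τ.symm a) (τ.symm b) hab ha

lemma N_eq {T T' : Finset (Fin (2*n-1))}
    (hzT : (⟨0, npos hn⟩ : Fin (2*n-1)) ∉ T) (hzT' : (⟨0, npos hn⟩ : Fin (2*n-1)) ∉ T')
    (hc : T.card = T'.card) :
    ((pairingMaps n hn).filter (fun π => satC π T)).card
      = ((pairingMaps n hn).filter (fun π => satC π T')).card := by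
  obtain ⟨σ, hσz, hσmem⟩ := exists_perm (⟨0, npos hn⟩ : Fin (2*n-1)) T T' hzT hzT' hc
  have hσz' : σ.symm (⟨0, npos hn⟩ : Fin (2*n-1)) = ⟨0, npos hn⟩ :=
    (Equiv.symm_apply_eq σ).mpr hσz.symm
  have hσmem' : ∀ x, σ.symm x ∈ T ↔ x ∈ T' := by
    intro x
    rw [← hσmem (σ.symm x), Equiv.apply_symm_apply]
  apply Finset.card_nbij' (fun π => π ∘ σ.symm) (fun π => π ∘ σ)
  · exact fun π hπ => comp_mem_filter hσz hσmem hπ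
  · intro π hπ
    have h := comp_mem_filter (τ := σ.symm) hσz' hσmem' hπ
    simpa using h
  · intro π _
    funext x
    simp
  · intro π _
    funext x
    simp

lemma swap_count {α β : Type*} [DecidableEq α] [DecidableEq β]
    (P : Finset α) (D : Finset β) (p : α → β → Prop) [∀ a, DecidablePred (p a)]
    [∀ b, Decidable (∀ a, p a b)] [∀ a b, Decidable (p a b)] :
    ∑ π ∈ P, (D.filter (p π)).card = ∑ T ∈ D, (P.filter (fun π => p π T)).card := by
  simp_rw [Finset.card_filter]
  exact Finset.sum_comm

lemma pairing_nonempty (n : ℕ) (hn : 0 < n) : (pairingMaps n hn).Nonempty := by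
  refine ⟨fun t => ⟨(t.val + 1) / 2, by have := t.isLt; omega⟩, mem_pairing_iff.mpr ⟨?_, ?_⟩⟩
  · exact Fin.ext (by norm_num)
  · intro i hi
    have hlt := i.isLt
    have h1 : 2 * i.val - 1 < 2*n-1 := by omega
    have h2 : 2 * i.val < 2*n-1 := by omega
    have hfil : univ.filter
          (fun t : Fin (2*n-1) => (⟨(t.val + 1) / 2, by have := t.isLt; omega⟩ : Fin n) = i)
        = {(⟨2 * i.val - 1, h1⟩ : Fin (2*n-1)), ⟨2 * i.val, h2⟩} := by
      ext t
      have := t.isLt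
      simp only [mem_filter, mem_univ, true_and, Finset.mem_insert, Finset.mem_singleton,
        Fin.ext_iff]
      omega
    rw [hfil, Finset.card_insert_of_notMem, Finset.card_singleton]
    simp only [Finset.mem_singleton, Fin.ext_iff]
    omega

end ExpMuAux

set_option maxHeartbeats 1000000 in
open ExpMuAux in
/-- Under a uniformly random pairing minor, the expected boundary fraction of
coordinate 1 satisfies `E_{π₂}[μ_g(j)] = μ'(2j)` for all `0 ≤ j ≤ n-1`. -/
theorem expected_mu_random_pairing (n : ℕ) (hn : 0 < n)
    (f' : Finset (Fin (2*n-1)) → Bool) (hf' : MonotoneB f')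
    (j : ℕ) (hj : j < n) :
    (∑ π ∈ pairingMaps n hn, mu (minorFun f' π) ⟨0, hn⟩ j) /
        (((pairingMaps n hn).card : ℕ) : ℚ) =
      mu f' ⟨0, by omega⟩ (2*j) := by
  show _ = mu f' ⟨0, npos hn⟩ (2*j)
  have hI : ∑ π ∈ pairingMaps n hn,
      ((boundary (minorFun f' π) (⟨0, hn⟩ : Fin n)).filter (fun S => S.card = j)).card
      = ∑ T ∈ (boundary f' (⟨0, npos hn⟩ : Fin (2*n-1))).filter (fun T => T.card = 2*j),
          ((pairingMaps n hn).filter (fun π => satC π T)).card := by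
    rw [Finset.sum_congr rfl (fun π hπ => stepA hπ f' j)]
    exact swap_count _ _ _
  have hII : ∑ T ∈ powersetCard (2*j) (univ.erase (⟨0, npos hn⟩ : Fin (2*n-1))),
      ((pairingMaps n hn).filter (fun π => satC π T)).card
      = (pairingMaps n hn).card * (n-1).choose j := by
    rw [← swap_count (pairingMaps n hn) _ (fun π T => satC π T)]
    rw [Finset.sum_congr rfl (fun π hπ => stepB hπ j), Finset.sum_const, smul_eq_mul]
  have hIII : (∑ π ∈ pairingMaps n hn,
      ((boundary (minorFun f' π) (⟨0, hn⟩ : Fin n)).filter (fun S => S.card = j)).card)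
        * (2*n-1-1).choose (2*j)
      = ((boundary f' (⟨0, npos hn⟩ : Fin (2*n-1))).filter (fun T => T.card = 2*j)).card
        * ((pairingMaps n hn).card * (n-1).choose j) := by
    have hEcard : (powersetCard (2*j) (univ.erase (⟨0, npos hn⟩ : Fin (2*n-1)))).card
        = (2*n-1-1).choose (2*j) := by
      rw [Finset.card_powersetCard, Finset.card_erase_of_mem (mem_univ _),
        Finset.card_univ, Fintype.card_fin]
    rw [hI]
    conv_lhs => rw [← hEcard]
    rw [Finset.sum_mul]
    have hinner : ∀ T ∈ (boundary f' (⟨0, npos hn⟩ : Fin (2*n-1))).filter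
          (fun T => T.card = 2*j),
        ((pairingMaps n hn).filter (fun π => satC π T)).card
          * (powersetCard (2*j) (univ.erase (⟨0, npos hn⟩ : Fin (2*n-1)))).card
        = ∑ T' ∈ powersetCard (2*j) (univ.erase (⟨0, npos hn⟩ : Fin (2*n-1))),
            ((pairingMaps n hn).filter (fun π => satC π T')).card := by
      intro T hT
      rw [mem_filter, mem_boundary] at hT
      calc ((pairingMaps n hn).filter (fun π => satC π T)).card
            * (powersetCard (2*j) (univ.erase (⟨0, npos hn⟩ : Fin (2*n-1)))).card
          = ∑ _T' ∈ powersetCard (2*j) (univ.erase (⟨0, npos hn⟩ : Fin (2*n-1))),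
              ((pairingMaps n hn).filter (fun π => satC π T)).card := by
            rw [Finset.sum_const, smul_eq_mul, mul_comm]
        _ = ∑ T' ∈ powersetCard (2*j) (univ.erase (⟨0, npos hn⟩ : Fin (2*n-1))),
              ((pairingMaps n hn).filter (fun π => satC π T')).card := by
            refine Finset.sum_congr rfl (fun T' hT' => ?_)
            rw [Finset.mem_powersetCard, Finset.subset_erase] at hT'
            exact N_eq hT.1.1 hT'.1.2 (by rw [hT.2, hT'.2])
    rw [Finset.sum_congr rfl hinner, Finset.sum_const, smul_eq_mul, hII]
  have hc1 : (((n-1).choose j : ℕ) : ℚ) ≠ 0 := by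
    exact_mod_cast (Nat.choose_pos (by omega : j ≤ n-1)).ne'
  have hc2 : ((((2*n-1-1)).choose (2*j) : ℕ) : ℚ) ≠ 0 := by
    exact_mod_cast (Nat.choose_pos (by omega : 2*j ≤ 2*n-1-1)).ne'
  have hp : (((pairingMaps n hn).card : ℕ) : ℚ) ≠ 0 := by
    exact_mod_cast (Finset.card_pos.mpr (pairing_nonempty n hn)).ne'
  simp only [mu]
  rw [← Finset.sum_div, div_div, div_eq_div_iff (mul_ne_zero hc1 hp) hc2]
  exact_mod_cast hIII.trans (by ring)
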